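/- Let A be a ring of characteristic p > 0 admitting a finite p-basis {b_i}_{i∈I}. Then for any n ≥ 0, the set {b_i}_{i∈I} ∪ {x_1, …, x_n} is a p-basis of the power series ring A[[x_1, …, x_n]]. -/

import Mathlib

/-- The subring of `p`-th powers of `A` (in characteristic `p` this is exactly the image of
the Frobenius). -/
def pthPowers (A : Type*) [CommRing A] (p : ℕ) : Subring A := Subring.closure (Set.range (· ^ p))

/-- `b : I → A` is a `p`-basis of `A`: the monomials `∏ i, b i ^ ϑ i` for finitely supported
`ϑ : I →₀ ℕ` with values `< p` form a basis of `A` as a module over the subring `A^p`. -/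
def IsPBasis (p : ℕ) {A : Type*} [CommRing A] {I : Type*} (b : I → A) : Prop :=
  LinearIndependent (pthPowers A p)
    (fun ϑ : {ϑ : I →₀ ℕ // ∀ i, ϑ i < p} => ϑ.1.prod fun i e => b i ^ e) ∧
  ⊤ ≤ Submodule.span (pthPowers A p)
    (Set.range fun ϑ : {ϑ : I →₀ ℕ // ∀ i, ϑ i < p} => ϑ.1.prod fun i e => b i ^ e)

namespace PBasisAux

open MvPowerSeries

/-! ### Generalities -/

theorem finite_theta (p : ℕ) (hp : 0 < p) (K : Type*) [Finite K] :
    Finite {ϑ : K →₀ ℕ // ∀ i, ϑ i < p} := by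
  refine Finite.of_injective (fun ϑ (i : K) => (⟨ϑ.1 i, ϑ.2 i⟩ : Fin p)) ?_
  intro ϑ ϑ' h
  exact Subtype.ext (Finsupp.ext fun i => congrArg Fin.val (congrFun h i))

theorem mem_pthPowers_iff {A : Type*} [CommRing A] {p : ℕ} [Fact p.Prime] [CharP A p]
    {x : A} : x ∈ pthPowers A p ↔ ∃ c : A, c ^ p = x := by
  have h1 : Set.range ((· ^ p) : A → A) = ((frobenius A p).range : Set A) := by
    ext y
    simp [frobenius_def, eq_comm]
  rw [pthPowers, h1, Subring.closure_eq, RingHom.mem_range]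
  simp [frobenius_def]

theorem prod_sumElim {I J M : Type*} [CommMonoid M] (ϑ : I →₀ ℕ) (ε : J →₀ ℕ)
    (g : I ⊕ J → M) :
    (Finsupp.sumElim ϑ ε).prod (fun j e => g j ^ e) =
      ϑ.prod (fun i e => g (Sum.inl i) ^ e) * ε.prod (fun j e => g (Sum.inr j) ^ e) := by
  classical
  have h : Finsupp.sumElim ϑ ε =
      Finsupp.embDomain ⟨Sum.inl, Sum.inl_injective⟩ ϑ +
      Finsupp.embDomain ⟨Sum.inr, Sum.inr_injective⟩ ε := by
    ext j
    cases j with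
    | inl i =>
      rw [Finsupp.sumElim_inl, Finsupp.add_apply,
        show (Sum.inl i : I ⊕ J) = (⟨Sum.inl, Sum.inl_injective⟩ : I ↪ I ⊕ J) i from rfl,
        Finsupp.embDomain_apply_self, Finsupp.embDomain_notin_range _ _ _ (by simp), add_zero]
    | inr j =>
      rw [Finsupp.sumElim_inr, Finsupp.add_apply,
        show (Sum.inr j : I ⊕ J) = (⟨Sum.inr, Sum.inr_injective⟩ : J ↪ I ⊕ J) j from rfl,
        Finsupp.embDomain_apply_self, Finsupp.embDomain_notin_range _ _ _ (by simp), zero_add]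
  rw [h, Finsupp.prod_add_index' (by simp) (fun a b c => pow_add _ _ _),
    Finsupp.prod_embDomain, Finsupp.prod_embDomain]
  rfl

/-! ### Power series lemmas -/

section PS

variable {σ A : Type*} [CommRing A] {p : ℕ} [hp : Fact p.Prime] [CharP A p]

theorem aux_monomial_pow (m : σ →₀ ℕ) (a : A) (k : ℕ) :
    (MvPowerSeries.monomial m a) ^ k = MvPowerSeries.monomial (k • m) (a ^ k) := by
  induction k with
  | zero => simp
  | succ k ih => rw [pow_succ, ih, MvPowerSeries.monomial_mul_monomial, pow_succ, succ_nsmul]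

instance : CharP (MvPowerSeries σ A) p := by
  refine charP_of_injective_ringHom (f := (MvPowerSeries.C : A →+* MvPowerSeries σ A)) ?_ p
  intro x y h
  simpa using congrArg ((MvPowerSeries.constantCoeff : MvPowerSeries σ A →+* A)) h

theorem aux_coeff_mul_eq_zero (f g : MvPowerSeries σ A) (k : σ →₀ ℕ)
    (hf : ∀ m ≤ k, coeff m f = 0) : coeff k (f * g) = 0 := by
  classical
  rw [coeff_mul]
  refine Finset.sum_eq_zero fun x hx => ?_
  rw [Finset.HasAntidiagonal.mem_antidiagonal] at hx
  rw [hf x.1 (hx ▸ le_self_add), zero_mul]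

open Classical in
theorem aux_coeff_pow (f : MvPowerSeries σ A) (k : σ →₀ ℕ) :
    coeff k (f ^ p) =
      coeff k ((∑ m ∈ Finset.Iic k, monomial m (coeff m f)) ^ p) := by
  classical
  set T := ∑ m ∈ Finset.Iic k, monomial m (coeff m f) with hT
  have hcT : ∀ m ≤ k, coeff m T = coeff m f := by
    intro m hm
    rw [hT, map_sum]
    rw [Finset.sum_eq_single m (fun c _ hc => by
      rw [coeff_monomial, if_neg fun h => hc h.symm]) (fun h => absurd (Finset.mem_Iic.mpr hm) h)]
    rw [coeff_monomial_same]
  have : f = T + (f - T) := by ring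
  rw [this, add_pow_char]
  have hz : coeff k ((f - T) ^ p) = 0 := by
    have hpp : p = (p - 1) + 1 := (Nat.succ_pred_eq_of_pos hp.out.pos).symm
    rw [hpp, pow_succ, mul_comm]
    exact aux_coeff_mul_eq_zero _ _ _ fun m hm => by
      rw [map_sub, hcT m hm, sub_self]
  rw [map_add, hz, add_zero]

theorem coeff_pow_char_smul (f : MvPowerSeries σ A) (q : σ →₀ ℕ) :
    coeff (p • q) (f ^ p) = (coeff q f) ^ p := by
  classical
  rw [aux_coeff_pow, sum_pow_char, map_sum]
  have hq : q ∈ Finset.Iic (p • q) := by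
    refine Finset.mem_Iic.mpr (Finsupp.le_def.mpr fun s => ?_)
    simpa using Nat.le_mul_of_pos_left (q s) hp.out.pos
  rw [Finset.sum_eq_single q
    (fun m _ hm => by
      rw [aux_monomial_pow, coeff_monomial, if_neg]
      intro h
      refine hm (Finsupp.ext fun s => ?_)
      have hs := DFunLike.congr_fun h s
      simp only [Finsupp.smul_apply, smul_eq_mul] at hs
      exact (Nat.eq_of_mul_eq_mul_left hp.out.pos hs).symm)
    (fun h => absurd hq h)]
  rw [aux_monomial_pow, coeff_monomial_same]

theorem coeff_pow_char_zero (f : MvPowerSeries σ A) (k : σ →₀ ℕ) (h : ¬ ∀ s, p ∣ k s) :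
    coeff k (f ^ p) = 0 := by
  classical
  rw [aux_coeff_pow, sum_pow_char, map_sum]
  refine Finset.sum_eq_zero fun m _ => ?_
  rw [aux_monomial_pow, coeff_monomial, if_neg]
  intro hm
  exact h fun s => ⟨m s, by rw [hm, Finsupp.smul_apply, smul_eq_mul]⟩

theorem prod_X_pow (ε : σ →₀ ℕ) :
    ε.prod (fun j e => (X j : MvPowerSeries σ A) ^ e) = monomial ε 1 := by
  induction ε using Finsupp.induction with
  | zero => simp
  | single_add j e f hjf he ih =>
    rw [Finsupp.prod_add_index' (by simp) (fun a b c => pow_add _ _ _),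
      Finsupp.prod_single_index (by simp), ih, X_pow_eq, monomial_mul_monomial, one_mul]

end PS

/-! ### The core coefficient computation -/

section Core

variable {A : Type*} [CommRing A] {p : ℕ} [hp : Fact p.Prime] [CharP A p]
  {I : Type*} (b : I → A) {n : ℕ}

theorem core [Fintype {ϑ : I →₀ ℕ // ∀ i, ϑ i < p}]
    [Fintype {ε : Fin n →₀ ℕ // ∀ j, ε j < p}]
    (w : {ϑ : I →₀ ℕ // ∀ i, ϑ i < p} × {ε : Fin n →₀ ℕ // ∀ j, ε j < p} →
      MvPowerSeries (Fin n) A)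
    (k : Fin n →₀ ℕ) (ε₀ : {ε : Fin n →₀ ℕ // ∀ j, ε j < p}) (q₀ : Fin n →₀ ℕ)
    (h1 : p • q₀ + ε₀.1 = k) :
    MvPowerSeries.coeff k
      (∑ x : {ϑ : I →₀ ℕ // ∀ i, ϑ i < p} × {ε : Fin n →₀ ℕ // ∀ j, ε j < p},
        (MvPowerSeries.C : A →+* MvPowerSeries (Fin n) A) (x.1.1.prod fun i e => b i ^ e) * (w x) ^ p *
          MvPowerSeries.monomial x.2.1 1) =
    ∑ ϑ : {ϑ : I →₀ ℕ // ∀ i, ϑ i < p},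
      (ϑ.1.prod fun i e => b i ^ e) * (MvPowerSeries.coeff q₀ (w (ϑ, ε₀))) ^ p := by
  classical
  rw [map_sum, Fintype.sum_prod_type]
  refine Finset.sum_congr rfl fun ϑ _ => ?_
  have hle : ε₀.1 ≤ k := h1 ▸ le_add_self
  have hsub : k - ε₀.1 = p • q₀ := by rw [← h1, add_tsub_cancel_right]
  rw [Finset.sum_eq_single ε₀
    (fun ε _ hε => by
      rw [MvPowerSeries.coeff_mul_monomial]
      split_ifs with hle'
      · rw [MvPowerSeries.coeff_C_mul, coeff_pow_char_zero, mul_zero, zero_mul]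
        intro hdvd
        refine hε (Subtype.ext (Finsupp.ext fun s => ?_))
        obtain ⟨cc, hcc⟩ := hdvd s
        rw [Finsupp.tsub_apply] at hcc
        have h1s : k s = p * q₀ s + ε₀.1 s := by
          rw [← h1]; simp
        have hles : ε.1 s ≤ k s := hle' s
        have hcc' : k s - ε.1 s = p * cc := hcc
        have hks : k s = p * cc + ε.1 s := by omega
        have : ε.1 s % p = ε₀.1 s % p := by
          conv_lhs => rw [← Nat.mul_add_mod p cc, ← hks]
          conv_rhs => rw [← Nat.mul_add_mod p (q₀ s), ← h1s]
        rwa [Nat.mod_eq_of_lt (ε.2 s), Nat.mod_eq_of_lt (ε₀.2 s)] at this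
      · rfl)
    (fun h => absurd (Finset.mem_univ ε₀) h)]
  rw [MvPowerSeries.coeff_mul_monomial, if_pos hle, hsub, MvPowerSeries.coeff_C_mul,
    coeff_pow_char_smul, mul_one]

end Core

/-! ### The index equivalence -/

noncomputable def thetaEquiv (p : ℕ) (I J : Type*) :
    {ϑ : (I ⊕ J) →₀ ℕ // ∀ j, ϑ j < p} ≃
      ({ϑ : I →₀ ℕ // ∀ i, ϑ i < p} × {ε : J →₀ ℕ // ∀ j, ε j < p}) where
  toFun t :=
    (⟨(Finsupp.sumFinsuppEquivProdFinsupp t.1).1, fun i => by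
        rw [Finsupp.fst_sumFinsuppEquivProdFinsupp]; exact t.2 (Sum.inl i)⟩,
     ⟨(Finsupp.sumFinsuppEquivProdFinsupp t.1).2, fun j => by
        rw [Finsupp.snd_sumFinsuppEquivProdFinsupp]; exact t.2 (Sum.inr j)⟩)
  invFun x := ⟨Finsupp.sumElim x.1.1 x.2.1, fun j => by
    cases j with
    | inl i => rw [Finsupp.sumElim_inl]; exact x.1.2 i
    | inr j => rw [Finsupp.sumElim_inr]; exact x.2.2 j⟩
  left_inv t := Subtype.ext (Finsupp.sumFinsuppEquivProdFinsupp.symm_apply_apply t.1)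
  right_inv x := by
    have h := Finsupp.sumFinsuppEquivProdFinsupp.apply_symm_apply
      ((x.1.1, x.2.1) : (_ →₀ ℕ) × (_ →₀ ℕ))
    ext : 2
    · exact congrArg Prod.fst h
    · exact congrArg Prod.snd h

theorem thetaEquiv_symm_val {p : ℕ} {I J : Type*}
    (x : {ϑ : I →₀ ℕ // ∀ i, ϑ i < p} × {ε : J →₀ ℕ // ∀ j, ε j < p}) :
    ((thetaEquiv p I J).symm x).1 = Finsupp.sumElim x.1.1 x.2.1 := rfl

end PBasisAux

open PBasisAux MvPowerSeries in
/-- If `A` is a ring of characteristic `p > 0` with a finite `p`-basis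
`{b_i}_{i ∈ I}`, then for any `n ≥ 0` the family `{b_i} ∪ {x_1, …, x_n}` is a `p`-basis of the
power series ring `A[[x_1, …, x_n]]`. -/
theorem isPBasis_mvPowerSeries {A : Type*} [CommRing A] (p : ℕ) (hp : p.Prime) [CharP A p]
    {I : Type*} [Finite I] (b : I → A) (hb : IsPBasis p b) (n : ℕ) :
    IsPBasis p (Sum.elim (fun i => (MvPowerSeries.C : A →+* MvPowerSeries (Fin n) A) (b i))
      (fun j : Fin n => MvPowerSeries.X j)) := by
  classical
  haveI : Fact p.Prime := ⟨hp⟩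
  haveI := finite_theta p hp.pos I
  haveI := finite_theta p hp.pos (Fin n)
  haveI := finite_theta p hp.pos (I ⊕ Fin n)
  haveI : Fintype {ϑ : I →₀ ℕ // ∀ i, ϑ i < p} := Fintype.ofFinite _
  haveI : Fintype {ε : Fin n →₀ ℕ // ∀ j, ε j < p} := Fintype.ofFinite _
  haveI : Fintype {ϑ : (I ⊕ Fin n) →₀ ℕ // ∀ j, ϑ j < p} := Fintype.ofFinite _
  set eΘ := thetaEquiv p I (Fin n) with heΘ
  have vJ_eq : ∀ x : {ϑ : I →₀ ℕ // ∀ i, ϑ i < p} × {ε : Fin n →₀ ℕ // ∀ j, ε j < p},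
      ((eΘ.symm x).1.prod fun j e =>
        (Sum.elim (fun i => (MvPowerSeries.C : A →+* MvPowerSeries (Fin n) A) (b i)) (fun j : Fin n => X j)) j ^ e) =
      (MvPowerSeries.C : A →+* MvPowerSeries (Fin n) A) (x.1.1.prod fun i e => b i ^ e) *
        MvPowerSeries.monomial x.2.1 1 := by
    intro x
    rw [heΘ, thetaEquiv_symm_val, prod_sumElim]
    congr 1
    · simp only [Sum.elim_inl]
      rw [map_finsuppProd]
      exact Finsupp.prod_congr fun i _ => (map_pow _ _ _).symm
    · simp only [Sum.elim_inr]
      exact prod_X_pow x.2.1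
  refine ⟨?_, ?_⟩
  · -- linear independence
    rw [Fintype.linearIndependent_iff]
    intro s hs t
    set g : {ϑ : I →₀ ℕ // ∀ i, ϑ i < p} × {ε : Fin n →₀ ℕ // ∀ j, ε j < p} →
        MvPowerSeries (Fin n) A :=
      fun x => Classical.choose (mem_pthPowers_iff.mp (s (eΘ.symm x)).2) with hgdef
    have hg : ∀ x, (g x) ^ p = ↑(s (eΘ.symm x)) := fun x =>
      Classical.choose_spec (mem_pthPowers_iff.mp (s (eΘ.symm x)).2)
    have h0 : ∀ k, MvPowerSeries.coeff k
        (∑ x : {ϑ : I →₀ ℕ // ∀ i, ϑ i < p} × {ε : Fin n →₀ ℕ // ∀ j, ε j < p},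
          (MvPowerSeries.C : A →+* MvPowerSeries (Fin n) A) (x.1.1.prod fun i e => b i ^ e) *
          (g x) ^ p * MvPowerSeries.monomial x.2.1 1) = 0 := by
      intro k
      have hsum : (∑ x : {ϑ : I →₀ ℕ // ∀ i, ϑ i < p} × {ε : Fin n →₀ ℕ // ∀ j, ε j < p},
          (MvPowerSeries.C : A →+* MvPowerSeries (Fin n) A) (x.1.1.prod fun i e => b i ^ e) *
          (g x) ^ p * MvPowerSeries.monomial x.2.1 1) =
          ∑ t : {ϑ : (I ⊕ Fin n) →₀ ℕ // ∀ j, ϑ j < p}, s t •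
            (t.1.prod fun j e =>
              (Sum.elim (fun i => (MvPowerSeries.C : A →+* MvPowerSeries (Fin n) A) (b i)) (fun j : Fin n => X j)) j ^ e)
          := by
        rw [← Equiv.sum_comp eΘ.symm (fun t : {ϑ : (I ⊕ Fin n) →₀ ℕ // ∀ j, ϑ j < p} => s t •
            (t.1.prod fun j e =>
              (Sum.elim (fun i => (MvPowerSeries.C : A →+* MvPowerSeries (Fin n) A) (b i)) (fun j : Fin n => X j)) j ^ e))]
        refine Finset.sum_congr rfl fun x _ => ?_
        rw [Subring.smul_def, smul_eq_mul, ← hg, vJ_eq]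
        ring
      have hs' : (∑ t : {ϑ : (I ⊕ Fin n) →₀ ℕ // ∀ j, ϑ j < p}, s t •
            (t.1.prod fun j e =>
              (Sum.elim (fun i => (MvPowerSeries.C : A →+* MvPowerSeries (Fin n) A) (b i)) (fun j : Fin n => X j)) j ^ e))
          = 0 := hs
      rw [hsum, hs', map_zero]
    have key : ∀ (ϑ : {ϑ : I →₀ ℕ // ∀ i, ϑ i < p}) (ε : {ε : Fin n →₀ ℕ // ∀ j, ε j < p})
        (q : Fin n →₀ ℕ), (MvPowerSeries.coeff q (g (ϑ, ε))) ^ p = 0 := by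
      intro ϑ ε q
      have h := h0 (p • q + ε.1)
      rw [core b g (p • q + ε.1) ε q rfl] at h
      have hAsum : (∑ ϑ' : {ϑ : I →₀ ℕ // ∀ i, ϑ i < p},
          (⟨(MvPowerSeries.coeff q (g (ϑ', ε))) ^ p,
            Subring.subset_closure ⟨_, rfl⟩⟩ : pthPowers A p) •
            (ϑ'.1.prod fun i e => b i ^ e)) = 0 := by
        rw [← h]
        refine Finset.sum_congr rfl fun ϑ' _ => ?_
        rw [Subring.smul_def, smul_eq_mul]
        exact mul_comm _ _
      have := Fintype.linearIndependent_iff.mp hb.1 _ hAsum ϑ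
      exact congrArg Subtype.val this
    have hg0 : (↑(s (eΘ.symm (eΘ t))) : MvPowerSeries (Fin n) A) = 0 := by
      rw [← hg (eΘ t)]
      ext k
      rw [map_zero]
      by_cases hk : ∀ s, p ∣ k s
      · have hkq : k = p • (k.mapRange (· / p) (Nat.zero_div p)) := by
          ext s
          rw [Finsupp.smul_apply, Finsupp.mapRange_apply, smul_eq_mul,
            Nat.mul_div_cancel' (hk s)]
        rw [hkq, coeff_pow_char_smul]
        exact key (eΘ t).1 (eΘ t).2 _
      · exact coeff_pow_char_zero _ _ hk
    rw [Equiv.symm_apply_apply] at hg0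
    exact Subtype.ext hg0
  · -- spanning
    intro f _
    have hrep : ∀ a : A, ∃ c : {ϑ : I →₀ ℕ // ∀ i, ϑ i < p} → pthPowers A p,
        ∑ ϑ : {ϑ : I →₀ ℕ // ∀ i, ϑ i < p},
          c ϑ • (ϑ.1.prod fun i e => b i ^ e) = a := by
      intro a
      exact (Submodule.mem_span_range_iff_exists_fun _).mp (hb.2 Submodule.mem_top)
    choose c hc using hrep
    have hrt : ∀ (k : Fin n →₀ ℕ) (ϑ : {ϑ : I →₀ ℕ // ∀ i, ϑ i < p}),
        ∃ r : A, r ^ p = ↑(c (MvPowerSeries.coeff k f) ϑ) := fun k ϑ =>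
      mem_pthPowers_iff.mp (c (MvPowerSeries.coeff k f) ϑ).2
    choose r hr using hrt
    set w : {ϑ : I →₀ ℕ // ∀ i, ϑ i < p} × {ε : Fin n →₀ ℕ // ∀ j, ε j < p} →
        MvPowerSeries (Fin n) A :=
      fun x => (fun q => r (p • q + x.2.1) x.1 : (Fin n →₀ ℕ) → A) with hwdef
    have hmod : ∀ k : Fin n →₀ ℕ,
        p • (k.mapRange (· / p) (Nat.zero_div p)) + (k.mapRange (· % p) (Nat.zero_mod p)) = k := by
      intro k
      ext s
      rw [Finsupp.add_apply, Finsupp.smul_apply, Finsupp.mapRange_apply, Finsupp.mapRange_apply,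
        smul_eq_mul, Nat.div_add_mod]
    have hf : f = ∑ x : {ϑ : I →₀ ℕ // ∀ i, ϑ i < p} × {ε : Fin n →₀ ℕ // ∀ j, ε j < p},
        (MvPowerSeries.C : A →+* MvPowerSeries (Fin n) A) (x.1.1.prod fun i e => b i ^ e) * (w x) ^ p *
          MvPowerSeries.monomial x.2.1 1 := by
      ext k
      rw [core b w k ⟨k.mapRange (· % p) (Nat.zero_mod p),
            fun s => by rw [Finsupp.mapRange_apply]; exact Nat.mod_lt _ hp.pos⟩
          (k.mapRange (· / p) (Nat.zero_div p)) (hmod k)]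
      have hcw : ∀ ϑ : {ϑ : I →₀ ℕ // ∀ i, ϑ i < p},
          MvPowerSeries.coeff (k.mapRange (· / p) (Nat.zero_div p))
            (w (ϑ, ⟨k.mapRange (· % p) (Nat.zero_mod p),
              fun s => by rw [Finsupp.mapRange_apply]; exact Nat.mod_lt _ hp.pos⟩)) = r k ϑ := by
        intro ϑ
        rw [hwdef]
        show r _ ϑ = r k ϑ
        rw [hmod k]
      rw [← hc (MvPowerSeries.coeff k f)]
      refine Finset.sum_congr rfl fun ϑ _ => ?_
      rw [hcw ϑ, hr k ϑ, Subring.smul_def, smul_eq_mul]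
      exact mul_comm _ _
    rw [hf]
    refine Submodule.sum_mem _ fun x _ => ?_
    have hterm : (MvPowerSeries.C : A →+* MvPowerSeries (Fin n) A) (x.1.1.prod fun i e => b i ^ e) * (w x) ^ p *
          MvPowerSeries.monomial x.2.1 1 =
        (⟨(w x) ^ p, Subring.subset_closure ⟨w x, rfl⟩⟩ : pthPowers (MvPowerSeries (Fin n) A) p) •
          ((eΘ.symm x).1.prod fun j e =>
            (Sum.elim (fun i => (MvPowerSeries.C : A →+* MvPowerSeries (Fin n) A) (b i)) (fun j : Fin n => X j)) j ^ e) := by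
      rw [Subring.smul_def, smul_eq_mul, vJ_eq]
      ring
    rw [hterm]
    exact Submodule.smul_mem _ _ (Submodule.subset_span ⟨eΘ.symm x, rfl⟩)
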